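/- Probabilistic soundness theorem: if every truth valuation in C has strictly positive basic weight, then every classical propositional tautology φ satisfies μ(φ) > 0. -/
import Mathlib


/-- Propositional formulas built from atoms via ¬, ∨, →. -/
inductive Formula (A : Type) : Type
  | atom : A → Formula A
  | neg  : Formula A → Formula A
  | orr  : Formula A → Formula A → Formula A
  | imp  : Formula A → Formula A → Formula A
deriving DecidableEq

/-- Well-formed sequences over a collection `V` of truth valuations. -/
inductive WFS (V : Type) : Type
  | leaf : V → WFS V
  | pair : WFS V → WFS V → WFS V
deriving DecidableEq

/-- Association between a WFS and a formula. -/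
def Assoc {V A : Type} : WFS V → Formula A → Prop
  | WFS.leaf _, Formula.atom _ => True
  | s, Formula.neg β => Assoc s β
  | WFS.pair s₁ s₂, Formula.orr α β => Assoc s₁ α ∧ Assoc s₂ β
  | WFS.pair s₁ s₂, Formula.imp α β => Assoc s₁ α ∧ Assoc s₂ β
  | _, _ => False

/-- Justification of a formula by a WFS (PML semantics). -/
def Justif {V A : Type} (val : V → A → Bool) : WFS V → Formula A → Prop
  | WFS.leaf v, Formula.atom a => val v a = true
  | s, Formula.neg β => ¬ Justif val s β
  | WFS.pair s₁ s₂, Formula.orr α β => Justif val s₁ α ∨ Justif val s₂ β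
  | WFS.pair s₁ s₂, Formula.imp α β => ¬ Justif val s₁ α ∨ Justif val s₂ β
  | _, _ => False

/-- Multiplicative weight allotment extending a basic weight distribution. -/
def weight {V : Type} (pbar : V → ℝ) : WFS V → ℝ
  | WFS.leaf v => pbar v
  | WFS.pair s₁ s₂ => weight pbar s₁ * weight pbar s₂

/-- The (finite) set of WFS associated to a formula. -/
def assocSeqs {V A : Type} [Fintype V] [DecidableEq V] : Formula A → Finset (WFS V)
  | Formula.atom _ => Finset.univ.image WFS.leaf
  | Formula.neg β => assocSeqs β
  | Formula.orr α β => (assocSeqs α ×ˢ assocSeqs β).image fun q => WFS.pair q.1 q.2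
  | Formula.imp α β => (assocSeqs α ×ˢ assocSeqs β).image fun q => WFS.pair q.1 q.2

-- The logical measure of a formula: total weight of associated justifying sequences.
open scoped Classical in
noncomputable def mu {V A : Type} [Fintype V] [DecidableEq V]
    (pbar : V → ℝ) (val : V → A → Bool) (φ : Formula A) : ℝ :=
  ∑ s ∈ (assocSeqs φ).filter (fun s => Justif val s φ), weight pbar s

/-- Derived conjunction: α ∧ β := ¬(¬α ∨ ¬β). -/
def Formula.conj {A : Type} (α β : Formula A) : Formula A :=
  Formula.neg (Formula.orr (Formula.neg α) (Formula.neg β))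

/-- Classical Boolean semantics. -/
def evalF {A : Type} (v : A → Bool) : Formula A → Bool
  | Formula.atom a => v a
  | Formula.neg α => !(evalF v α)
  | Formula.orr α β => evalF v α || evalF v β
  | Formula.imp α β => !(evalF v α) || evalF v β

/-- Diagonal sequence: the valuation `v` at every leaf position of a formula. -/
def diag {V A : Type} (v : V) : Formula A → WFS V
  | Formula.atom _ => WFS.leaf v
  | Formula.neg α => diag v α
  | Formula.orr α β => WFS.pair (diag v α) (diag v β)
  | Formula.imp α β => WFS.pair (diag v α) (diag v β)

/-- Number of atom occurrences in a formula. -/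
def numAtoms {A : Type} : Formula A → ℕ
  | Formula.atom _ => 1
  | Formula.neg α => numAtoms α
  | Formula.orr α β => numAtoms α + numAtoms β
  | Formula.imp α β => numAtoms α + numAtoms β


lemma diag_mem {V A : Type} [Fintype V] [DecidableEq V] (v : V) :
    ∀ φ : Formula A, diag v φ ∈ (assocSeqs φ : Finset (WFS V))
  | Formula.atom a => by simp [diag, assocSeqs]
  | Formula.neg α => diag_mem v α
  | Formula.orr α β => by
      simp only [diag, assocSeqs, Finset.mem_image]
      exact ⟨(diag v α, diag v β), Finset.mk_mem_product (diag_mem v α) (diag_mem v β), rfl⟩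
  | Formula.imp α β => by
      simp only [diag, assocSeqs, Finset.mem_image]
      exact ⟨(diag v α, diag v β), Finset.mk_mem_product (diag_mem v α) (diag_mem v β), rfl⟩

lemma justif_diag {V A : Type} (val : V → A → Bool) (v : V) :
    ∀ φ : Formula A, Justif val (diag v φ) φ ↔ evalF (val v) φ = true
  | Formula.atom a => by simp [diag, Justif, evalF]
  | Formula.neg α => by
      simp [diag, Justif, evalF, justif_diag val v α]
  | Formula.orr α β => by
      simp [diag, Justif, evalF, justif_diag val v α, justif_diag val v β]
  | Formula.imp α β => by
      simp [diag, Justif, evalF, justif_diag val v α, justif_diag val v β]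

lemma weight_pos {V : Type} (pbar : V → ℝ) (hpos : ∀ v, 0 < pbar v) :
    ∀ s : WFS V, 0 < weight pbar s
  | WFS.leaf v => hpos v
  | WFS.pair s₁ s₂ => mul_pos (weight_pos pbar hpos s₁) (weight_pos pbar hpos s₂)

/-- probabilistic soundness — every classical tautology has strictly
positive measure whenever every valuation has strictly positive basic weight. -/
theorem stmt8 {A : Type} [Fintype A] [DecidableEq A] (pbar : (A → Bool) → ℝ)
    (hpos : ∀ v, 0 < pbar v) (hsum : ∑ v, pbar v = 1)
    (φ : Formula A) (htaut : ∀ v : A → Bool, evalF v φ = true) :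
    0 < mu pbar (fun v => v) φ := by
  classical
  have hne : ((assocSeqs φ).filter (fun s => Justif (fun v => v) s φ)).Nonempty := by
    obtain v : A → Bool := fun _ => true
    exact ⟨diag v φ, Finset.mem_filter.2 ⟨diag_mem v φ, (justif_diag _ v φ).2 (htaut v)⟩⟩
  unfold mu
  exact Finset.sum_pos (fun s _ => weight_pos pbar hpos s) hne
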